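/- There is a universal constant C > 0 such that for all integers k ≥ 2 and all ε ∈ (0,1] the following holds: there exist a set of indices I ⊆ {⌈kε/8⌉, …, k} with |I| ≤ C · ε^{−1} · log k, and weights w_i ≥ 0 for i ∈ I, such that for every nondecreasing sequence of nonnegative reals a_{⌈kε/8⌉} ≤ a_{⌈kε/8⌉+1} ≤ ⋯ ≤ a_k one has (1 − ε/4) · Σ_{i ∈ I} w_i a_i ≤ Σ_{i=⌈kε/8⌉}^{k} a_i ≤ (1 + ε/4) · Σ_{i ∈ I} w_i a_i. In particular, for any set P of n ≥ k points in ℝ^d, any monotone nondecreasing f : ℝ → [0,∞), and any query point q ∈ ℝ^d, the weighted sum Σ_{i ∈ I} w_i f(d_i(P,q)) approximates Σ_{i=⌈kε/8⌉}^{k} f(d_i(P,q)) to within a multiplicative factor 1 ± ε/4. -/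

import Mathlib

open Metric

/-- The `i`-th nearest neighbor distance of `q` to the finite point set `P`. -/
noncomputable def kthNNDist {d : ℕ} (k : ℕ) (P : Finset (EuclideanSpace ℝ (Fin d)))
    (q : EuclideanSpace ℝ (Fin d)) : ℝ :=
  sInf {r : ℝ | 0 ≤ r ∧ k ≤ (P.filter fun p => dist q p ≤ r).card}

/-- The geometric grid sequence used to build the coreset. -/
private noncomputable def gseq (δ : ℝ) : ℕ → ℕ
  | 0 => 0
  | t + 1 => gseq δ t + 1 + ⌊δ * (gseq δ t + 1)⌋₊

private lemma le_gseq (δ : ℝ) : ∀ t, t ≤ gseq δ t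
  | 0 => le_refl 0
  | t + 1 => by
      have := le_gseq δ t
      show t + 1 ≤ gseq δ t + 1 + ⌊δ * (gseq δ t + 1)⌋₊
      omega

private lemma gseq_mono (δ : ℝ) : Monotone (gseq δ) := by
  apply monotone_nat_of_le_succ
  intro t
  show gseq δ t ≤ gseq δ t + 1 + ⌊δ * (gseq δ t + 1)⌋₊
  omega

private lemma gseq_growth {δ : ℝ} (hδ : 0 ≤ δ) : ∀ t, (1 + δ) ^ t ≤ (gseq δ t : ℝ) + 1
  | 0 => by simp [gseq]
  | t + 1 => by
      have ih := gseq_growth hδ t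
      have hflo : δ * (gseq δ t + 1) < ⌊δ * ((gseq δ t : ℝ) + 1)⌋₊ + 1 :=
        Nat.lt_floor_add_one _
      have hpow : (0:ℝ) ≤ (1 + δ) ^ t := by positivity
      show (1 + δ) ^ (t + 1) ≤ ((gseq δ t + 1 + ⌊δ * ((gseq δ t : ℝ) + 1)⌋₊ : ℕ) : ℝ) + 1
      push_cast
      have : (1 + δ) ^ (t + 1) = (1 + δ) ^ t * (1 + δ) := by ring
      rw [this]
      have h1 : (1 + δ) ^ t * (1 + δ) ≤ ((gseq δ t : ℝ) + 1) * (1 + δ) := by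
        apply mul_le_mul_of_nonneg_right ih (by linarith)
      calc (1 + δ) ^ t * (1 + δ) ≤ ((gseq δ t : ℝ) + 1) * (1 + δ) := h1
        _ = ((gseq δ t : ℝ) + 1) + δ * ((gseq δ t : ℝ) + 1) := by ring
        _ ≤ (gseq δ t : ℝ) + 1 + (⌊δ * ((gseq δ t : ℝ) + 1)⌋₊ + 1) := by linarith
        _ = (gseq δ t : ℝ) + 1 + (⌊δ * ((gseq δ t : ℝ) + 1)⌋₊ : ℝ) + 1 := by ring

open Classical in
/-- Index of the largest grid point `≤ u`. -/
private noncomputable def tIdx (δ : ℝ) (u : ℕ) : ℕ :=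
  Nat.findGreatest (fun t => gseq δ t ≤ u) u

private lemma gseq_tIdx_le (δ : ℝ) (u : ℕ) : gseq δ (tIdx δ u) ≤ u := by
  classical
  exact Nat.findGreatest_spec (P := fun t => gseq δ t ≤ u) (Nat.zero_le u) (by simp [gseq])

private lemma lt_gseq_tIdx_succ (δ : ℝ) (u : ℕ) : u < gseq δ (tIdx δ u + 1) := by
  classical
  by_cases h : tIdx δ u + 1 ≤ u
  · have := Nat.findGreatest_is_greatest (P := fun t => gseq δ t ≤ u)
      (k := tIdx δ u + 1) (Nat.lt_succ_self _) h
    omega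
  · have := le_gseq δ (tIdx δ u + 1)
    omega

private lemma tIdx_crossing {δ : ℝ} {u u' : ℕ} (_h1 : u ≤ u')
    (h2 : gseq δ (tIdx δ u') ≤ u) : u' < gseq δ (tIdx δ u + 1) := by
  classical
  by_contra h
  push_neg at h
  have hb : tIdx δ u + 1 ≤ u' := le_trans (le_gseq δ _) h
  have hle : tIdx δ u + 1 ≤ tIdx δ u' :=
    Nat.le_findGreatest (P := fun t => gseq δ t ≤ u') hb h
  have := gseq_mono δ hle
  have := lt_gseq_tIdx_succ δ u
  omega

private lemma kthNNDist_mono {d : ℕ} {P : Finset (EuclideanSpace ℝ (Fin d))}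
    (hP : P.Nonempty) {i j : ℕ} (hij : i ≤ j) (hj : j ≤ P.card)
    (q : EuclideanSpace ℝ (Fin d)) : kthNNDist i P q ≤ kthNNDist j P q := by
  unfold kthNNDist
  apply csInf_le_csInf
  · exact ⟨0, fun r hr => hr.1⟩
  · refine ⟨P.sup' hP fun p => dist q p, ?_, ?_⟩
    · obtain ⟨p, hp⟩ := hP
      exact le_trans dist_nonneg (Finset.le_sup' _ hp)
    · have hfil : P.filter (fun p => dist q p ≤ P.sup' hP fun p => dist q p) = P :=
        Finset.filter_true_of_mem fun p hp => Finset.le_sup' _ hp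
      rw [hfil]
      exact hj
  · intro r hr
    exact ⟨hr.1, le_trans hij hr.2⟩

set_option maxHeartbeats 1000000 in
theorem exists_coreset_for_monotone_sums :
    ∃ C : ℝ, 0 < C ∧ ∀ k : ℕ, 2 ≤ k → ∀ ε : ℝ, 0 < ε → ε ≤ 1 →
      ∃ (I : Finset ℕ) (w : ℕ → ℝ),
        I ⊆ Finset.Icc ⌈(k : ℝ) * ε / 8⌉₊ k ∧
        (∀ i ∈ I, 0 ≤ w i) ∧
        (I.card : ℝ) ≤ C * ε⁻¹ * Real.log k ∧
        (∀ a : ℕ → ℝ,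
          (∀ i ∈ Finset.Icc ⌈(k : ℝ) * ε / 8⌉₊ k, 0 ≤ a i) →
          (∀ i j, ⌈(k : ℝ) * ε / 8⌉₊ ≤ i → i ≤ j → j ≤ k → a i ≤ a j) →
          (1 - ε / 4) * (∑ i ∈ I, w i * a i) ≤
              (∑ i ∈ Finset.Icc ⌈(k : ℝ) * ε / 8⌉₊ k, a i) ∧
            (∑ i ∈ Finset.Icc ⌈(k : ℝ) * ε / 8⌉₊ k, a i) ≤
              (1 + ε / 4) * ∑ i ∈ I, w i * a i) ∧
        (∀ (d n : ℕ) (P : Finset (EuclideanSpace ℝ (Fin d))), P.card = n → k ≤ n →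
          ∀ f : ℝ → ℝ, Monotone f → (∀ x, 0 ≤ f x) →
          ∀ q : EuclideanSpace ℝ (Fin d),
            (1 - ε / 4) * (∑ i ∈ I, w i * f (kthNNDist i P q)) ≤
                (∑ i ∈ Finset.Icc ⌈(k : ℝ) * ε / 8⌉₊ k, f (kthNNDist i P q)) ∧
              (∑ i ∈ Finset.Icc ⌈(k : ℝ) * ε / 8⌉₊ k, f (kthNNDist i P q)) ≤
                (1 + ε / 4) * ∑ i ∈ I, w i * f (kthNNDist i P q)) := by
  classical
  refine ⟨16, by norm_num, ?_⟩
  intro k hk ε hε hε1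
  set δ : ℝ := ε / 4 with hδdef
  have hδ0 : 0 < δ := by positivity
  have hδ1 : δ ≤ 1 / 4 := by rw [hδdef]; linarith
  set m : ℕ := ⌈(k : ℝ) * ε / 8⌉₊ with hmdef
  have hm1 : 1 ≤ m := by
    rw [hmdef]
    apply Nat.one_le_ceil_iff.mpr
    have : (0:ℝ) < (k:ℝ) := by exact_mod_cast Nat.lt_of_lt_of_le (by norm_num) hk
    positivity
  have hmk : m ≤ k := by
    rw [hmdef]
    apply Nat.ceil_le.mpr
    have : (0:ℝ) ≤ (k:ℝ) := Nat.cast_nonneg k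
    nlinarith
  set rep : ℕ → ℕ := fun j => k - gseq δ (tIdx δ (k - j)) with hrepdef
  set I : Finset ℕ := (Finset.Icc m k).image rep with hIdef
  set w : ℕ → ℝ := fun i => (((Finset.Icc m k).filter fun j => rep j = i).card : ℝ)
    with hwdef
  have hrep_ge : ∀ j, j ≤ k → j ≤ rep j := by
    intro j hj
    have := gseq_tIdx_le δ (k - j)
    simp only [hrepdef]
    omega
  have hrep_le : ∀ j, rep j ≤ k := fun j => Nat.sub_le _ _
  have hIsub : I ⊆ Finset.Icc m k := by
    intro i hi
    rw [hIdef] at hi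
    obtain ⟨j, hj, rfl⟩ := Finset.mem_image.mp hi
    rw [Finset.mem_Icc] at hj ⊢
    exact ⟨le_trans hj.1 (hrep_ge j hj.2), hrep_le j⟩
  -- Key approximation statement for arbitrary monotone sequences
  have key : ∀ a : ℕ → ℝ, (∀ i ∈ Finset.Icc m k, 0 ≤ a i) →
      (∀ i j, m ≤ i → i ≤ j → j ≤ k → a i ≤ a j) →
      (1 - ε / 4) * (∑ i ∈ I, w i * a i) ≤ (∑ i ∈ Finset.Icc m k, a i) ∧
        (∑ i ∈ Finset.Icc m k, a i) ≤ (1 + ε / 4) * ∑ i ∈ I, w i * a i := by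
    intro a ha0 hamono
    have hW' : ∑ x ∈ Finset.Icc m k, a (rep x) = ∑ i ∈ I, w i * a i := by
      rw [Finset.sum_comp a rep]
      apply Finset.sum_congr rfl
      intro i _
      simp [hwdef, nsmul_eq_mul]
    have hrep_mem : ∀ x ∈ Finset.Icc m k, rep x ∈ Finset.Icc m k := by
      intro x hx
      rw [Finset.mem_Icc] at hx ⊢
      exact ⟨le_trans hx.1 (hrep_ge x hx.2), hrep_le x⟩
    have hSW : (∑ x ∈ Finset.Icc m k, a x) ≤ ∑ x ∈ Finset.Icc m k, a (rep x) := by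
      apply Finset.sum_le_sum
      intro x hx
      rw [Finset.mem_Icc] at hx
      exact hamono x (rep x) hx.1 (hrep_ge x hx.2) (hrep_le x)
    have hW0 : 0 ≤ ∑ x ∈ Finset.Icc m k, a (rep x) :=
      Finset.sum_nonneg fun x hx => ha0 (rep x) (hrep_mem x hx)
    -- upper bound side is easy
    have hupper : (∑ x ∈ Finset.Icc m k, a x) ≤
        (1 + ε / 4) * ∑ i ∈ I, w i * a i := by
      rw [← hW']
      nlinarith
    refine ⟨?_, hupper⟩
    -- lower bound side via step-function decomposition
    set c : ℕ → ℝ := fun j => if j = m then a m else a j - a (j - 1) with hcdef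
    have hc0 : ∀ j ∈ Finset.Icc m k, 0 ≤ c j := by
      intro j hj
      rw [Finset.mem_Icc] at hj
      rw [hcdef]
      by_cases hjm : j = m
      · simp only [hjm, if_pos rfl]
        exact ha0 m (Finset.mem_Icc.mpr ⟨le_refl m, hmk⟩)
      · simp only [if_neg hjm]
        have : a (j - 1) ≤ a j := hamono (j - 1) j (by omega) (by omega) hj.2
        linarith
    have hsum_c : ∀ i, m ≤ i → i ≤ k → ∑ j ∈ Finset.Icc m i, c j = a i := by
      intro i hmi
      induction i, hmi using Nat.le_induction with
      | base =>
          intro _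
          rw [Finset.Icc_self, Finset.sum_singleton, hcdef]
          simp
      | succ i hmi ih =>
          intro hik
          rw [Finset.sum_Icc_succ_top (by omega), ih (by omega)]
          have h1 : i + 1 ≠ m := by omega
          simp only [hcdef, if_neg h1]
          simp
    have hswap : ∀ h : ℕ → ℕ, (∀ j ∈ Finset.Icc m k, m ≤ h j ∧ h j ≤ k) →
        ∑ x ∈ Finset.Icc m k, a (h x) =
          ∑ j ∈ Finset.Icc m k,
            (((Finset.Icc m k).filter fun x => j ≤ h x).card : ℝ) * c j := by
      intro h hh
      calc ∑ x ∈ Finset.Icc m k, a (h x)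
          = ∑ x ∈ Finset.Icc m k, ∑ j ∈ Finset.Icc m (h x), c j := by
            apply Finset.sum_congr rfl
            intro x hx
            exact (hsum_c (h x) (hh x hx).1 (hh x hx).2).symm
        _ = ∑ x ∈ Finset.Icc m k, ∑ j ∈ Finset.Icc m k, if j ≤ h x then c j else 0 := by
            apply Finset.sum_congr rfl
            intro x hx
            have hhx := hh x hx
            rw [← Finset.sum_filter]
            congr 1
            ext j
            simp only [Finset.mem_Icc, Finset.mem_filter]
            omega
        _ = ∑ j ∈ Finset.Icc m k, ∑ x ∈ Finset.Icc m k, if j ≤ h x then c j else 0 :=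
            Finset.sum_comm
        _ = ∑ j ∈ Finset.Icc m k,
              (((Finset.Icc m k).filter fun x => j ≤ h x).card : ℝ) * c j := by
            apply Finset.sum_congr rfl
            intro j _
            rw [← Finset.sum_filter, Finset.sum_const, nsmul_eq_mul]
    -- the per-index tail bound
    have htail : ∀ j ∈ Finset.Icc m k,
        (1 - ε / 4) * (((Finset.Icc m k).filter fun x => j ≤ rep x).card : ℝ) ≤
          (((Finset.Icc m k).filter fun x => j ≤ x).card : ℝ) := by
      intro j hj
      rw [Finset.mem_Icc] at hj
      set u : ℕ := k - j with hudef
      set G : ℕ := gseq δ (tIdx δ u) with hGdef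
      set v : ℕ := gseq δ (tIdx δ u + 1) with hvdef
      have hGu : G ≤ u := gseq_tIdx_le δ u
      have huv : u < v := lt_gseq_tIdx_succ δ u
      have hvform : v = G + 1 + ⌊δ * ((G : ℝ) + 1)⌋₊ := by
        rw [hvdef, hGdef]; rfl
      -- split the filter
      have hsplit : ((Finset.Icc m k).filter fun x => j ≤ rep x) ⊆
          ((Finset.Icc m k).filter fun x => j ≤ x) ∪
            ((Finset.Icc m k).filter fun x => x < j ∧ j ≤ rep x) := by
        intro x hx
        simp only [Finset.mem_filter, Finset.mem_union] at hx ⊢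
        rcases le_or_gt j x with h | h
        · exact Or.inl ⟨hx.1, h⟩
        · exact Or.inr ⟨hx.1, h, hx.2⟩
      have hDval : ((Finset.Icc m k).filter fun x => j ≤ x) = Finset.Icc j k := by
        ext x
        simp only [Finset.mem_filter, Finset.mem_Icc]
        omega
      have hDcard : ((Finset.Icc m k).filter fun x => j ≤ x).card = u + 1 := by
        rw [hDval, Nat.card_Icc]
        omega
      -- bound the crossing set
      have hEbound : (((Finset.Icc m k).filter fun x => x < j ∧ j ≤ rep x).card : ℝ) ≤
          δ * ((u : ℝ) + 1) := by
        have hinj : ((Finset.Icc m k).filter fun x => x < j ∧ j ≤ rep x).card ≤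
            (Finset.Ico (u + 1) v).card := by
          apply Finset.card_le_card_of_injOn (fun x => k - x)
          · intro x hx
            simp only [Finset.mem_coe, Finset.mem_filter, Finset.mem_Icc] at hx
            obtain ⟨⟨hmx, hxk⟩, hxj, hjrep⟩ := hx
            have hG' : gseq δ (tIdx δ (k - x)) ≤ k - x := gseq_tIdx_le δ (k - x)
            have hrx : rep x = k - gseq δ (tIdx δ (k - x)) := rfl
            have hjk' : j ≤ k := hj.2
            have h2 : gseq δ (tIdx δ (k - x)) ≤ u := by
              rw [hudef]
              omega
            have h3 : u ≤ k - x := by rw [hudef]; omega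
            have h4 : k - x < v := by
              rw [hvdef]
              exact tIdx_crossing h3 h2
            show k - x ∈ (Finset.Ico (u + 1) v : Set ℕ)
            rw [Finset.mem_coe, Finset.mem_Ico]
            have h5 : u = k - j := hudef
            omega
          · intro x hx y hy hxy
            simp only [Finset.coe_filter, Set.mem_setOf_eq, Finset.mem_Icc] at hx hy
            have hxy' : k - x = k - y := hxy
            omega
        have hcard2 : (Finset.Ico (u + 1) v).card ≤ ⌊δ * ((G : ℝ) + 1)⌋₊ := by
          rw [Nat.card_Ico]
          omega
        have hfloor : (⌊δ * ((G : ℝ) + 1)⌋₊ : ℝ) ≤ δ * ((G : ℝ) + 1) :=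
          Nat.floor_le (by positivity)
        have hGu' : (G : ℝ) + 1 ≤ (u : ℝ) + 1 := by
          have : (G : ℝ) ≤ (u : ℝ) := by exact_mod_cast hGu
          linarith
        calc (((Finset.Icc m k).filter fun x => x < j ∧ j ≤ rep x).card : ℝ)
            ≤ (⌊δ * ((G : ℝ) + 1)⌋₊ : ℝ) := by exact_mod_cast le_trans hinj hcard2
          _ ≤ δ * ((G : ℝ) + 1) := hfloor
          _ ≤ δ * ((u : ℝ) + 1) := by nlinarith
      have hNcard : (((Finset.Icc m k).filter fun x => j ≤ rep x).card : ℝ) ≤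
          ((u : ℝ) + 1) + δ * ((u : ℝ) + 1) := by
        have h1 := Finset.card_le_card hsplit
        have h2 := Finset.card_union_le
          ((Finset.Icc m k).filter fun x => j ≤ x)
          ((Finset.Icc m k).filter fun x => x < j ∧ j ≤ rep x)
        have h3 : (((Finset.Icc m k).filter fun x => j ≤ rep x).card : ℝ) ≤
            (((Finset.Icc m k).filter fun x => j ≤ x).card : ℝ) +
              (((Finset.Icc m k).filter fun x => x < j ∧ j ≤ rep x).card : ℝ) := by
          exact_mod_cast le_trans h1 h2
        rw [hDcard] at h3
        push_cast at h3
        linarith [hEbound]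
      rw [hDcard]
      push_cast
      have hu0 : (0:ℝ) ≤ (u : ℝ) + 1 := by positivity
      have hN0 : (0:ℝ) ≤ (((Finset.Icc m k).filter fun x => j ≤ rep x).card : ℝ) :=
        Nat.cast_nonneg _
      nlinarith [hNcard]
    -- combine
    rw [← hW']
    rw [hswap rep (fun j hj => ⟨(Finset.mem_Icc.mp (hrep_mem j hj)).1,
      (Finset.mem_Icc.mp (hrep_mem j hj)).2⟩)]
    have hid : ∑ x ∈ Finset.Icc m k, a x =
        ∑ j ∈ Finset.Icc m k,
          (((Finset.Icc m k).filter fun x => j ≤ x).card : ℝ) * c j := by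
      have := hswap id (fun j hj => by
        rw [Finset.mem_Icc] at hj; exact ⟨hj.1, hj.2⟩)
      simpa using this
    rw [hid, Finset.mul_sum]
    apply Finset.sum_le_sum
    intro j hj
    have h1 := htail j hj
    have h2 := hc0 j hj
    calc (1 - ε / 4) * ((((Finset.Icc m k).filter fun x => j ≤ rep x).card : ℝ) * c j)
        = ((1 - ε / 4) * (((Finset.Icc m k).filter fun x => j ≤ rep x).card : ℝ)) * c j := by
          ring
      _ ≤ (((Finset.Icc m k).filter fun x => j ≤ x).card : ℝ) * c j :=
          mul_le_mul_of_nonneg_right h1 h2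
  -- cardinality bound
  have hlogk : Real.log 2 ≤ Real.log k := by
    apply Real.log_le_log (by norm_num)
    exact_mod_cast hk
  have hlog2 : (1:ℝ) / 2 < Real.log 2 := by
    have := Real.log_two_gt_d9
    linarith
  have hlogδ : ε / 8 ≤ Real.log (1 + δ) := by
    have h0 : Real.exp (δ / 2) ≤ 1 + δ := by
      have h1 : -(δ / 2) + 1 ≤ Real.exp (-(δ / 2)) := Real.add_one_le_exp _
      rw [Real.exp_neg] at h1
      have h2 : (0:ℝ) < Real.exp (δ / 2) := Real.exp_pos _
      have h3 : (1 - δ / 2) * Real.exp (δ / 2) ≤ 1 := by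
        have := mul_le_mul_of_nonneg_right h1 h2.le
        rw [inv_mul_cancel₀ h2.ne'] at this
        linarith
      nlinarith
    have := Real.log_le_log (Real.exp_pos _) h0
    rw [Real.log_exp] at this
    rw [hδdef] at this ⊢
    linarith
  have hIcard : (I.card : ℝ) ≤ 16 * ε⁻¹ * Real.log k := by
    set B : ℕ := ⌊Real.log k / Real.log (1 + δ)⌋₊ with hBdef
    have hlogδpos : 0 < Real.log (1 + δ) := Real.log_pos (by linarith)
    have hsub : I ⊆ (Finset.range (B + 1)).image (fun t => k - gseq δ t) := by
      intro i hi
      rw [hIdef] at hi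
      obtain ⟨j, hj, rfl⟩ := Finset.mem_image.mp hi
      rw [Finset.mem_Icc] at hj
      apply Finset.mem_image.mpr
      refine ⟨tIdx δ (k - j), ?_, rfl⟩
      rw [Finset.mem_range]
      set t := tIdx δ (k - j) with htdef
      have h1 : (1 + δ) ^ t ≤ (gseq δ t : ℝ) + 1 := gseq_growth hδ0.le t
      have h2 : gseq δ t ≤ k - j := gseq_tIdx_le δ (k - j)
      have h3 : gseq δ t + 1 ≤ k := by omega
      have h4 : (1 + δ) ^ t ≤ (k : ℝ) := by
        calc (1 + δ) ^ t ≤ (gseq δ t : ℝ) + 1 := h1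
          _ ≤ (k : ℝ) := by exact_mod_cast h3
      have h5 : (t : ℝ) * Real.log (1 + δ) ≤ Real.log k := by
        have := Real.log_le_log (by positivity) h4
        rwa [Real.log_pow] at this
      have h6 : (t : ℝ) ≤ Real.log k / Real.log (1 + δ) :=
        (le_div_iff₀ hlogδpos).mpr h5
      have h7 : t ≤ B := Nat.le_floor h6
      omega
    have hcard1 : I.card ≤ B + 1 := by
      calc I.card ≤ ((Finset.range (B + 1)).image (fun t => k - gseq δ t)).card :=
            Finset.card_le_card hsub
        _ ≤ (Finset.range (B + 1)).card := Finset.card_image_le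
        _ = B + 1 := Finset.card_range _
    have hB : (B : ℝ) ≤ Real.log k / Real.log (1 + δ) :=
      Nat.floor_le (by positivity)
    have hεinv : (1:ℝ) ≤ ε⁻¹ := one_le_inv_iff₀.mpr ⟨hε, hε1⟩
    have hlogkpos : (0:ℝ) < Real.log k := by linarith
    have hd : Real.log k / Real.log (1 + δ) ≤ Real.log k / (ε / 8) := by
      apply div_le_div_of_nonneg_left hlogkpos.le (by positivity) hlogδ
    have he : Real.log k / (ε / 8) = 8 * ε⁻¹ * Real.log k := by
      field_simp
    have hone : (1:ℝ) ≤ 8 * ε⁻¹ * Real.log k := by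
      have h1 : (1:ℝ) * (1/2) ≤ ε⁻¹ * Real.log k :=
        mul_le_mul hεinv (by linarith) (by norm_num) (by linarith)
      linarith
    calc (I.card : ℝ) ≤ (B : ℝ) + 1 := by exact_mod_cast hcard1
      _ ≤ Real.log k / Real.log (1 + δ) + 1 := by linarith
      _ ≤ 8 * ε⁻¹ * Real.log k + 1 := by linarith
      _ ≤ 8 * ε⁻¹ * Real.log k + 8 * ε⁻¹ * Real.log k := by linarith
      _ = 16 * ε⁻¹ * Real.log k := by ring
  refine ⟨I, w, hIsub, ?_, hIcard, key, ?_⟩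
  · intro i _
    exact Nat.cast_nonneg _
  · intro d n P hPcard hkn f hf hf0 q
    apply key (fun i => f (kthNNDist i P q))
    · intro i _
      exact hf0 _
    · intro i j hi hij hjk
      apply hf
      have hPne : P.Nonempty := by
        apply Finset.card_pos.mp
        omega
      exact kthNNDist_mono hPne hij (by omega) q
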